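/- Let Ω ⊆ ℝ² be open and connected, let q : Ω → ℝ be smooth and nowhere vanishing with q_x, q_y, q_xx, q_yy, q_xy all nowhere vanishing on Ω, let a, a₀, b, b₀, λ ∈ ℝ, set A(x) = a x² + a₀ and B(y) = b y² + b₀, and suppose there exist smooth Sˣ, Sʸ : Ω → ℝ such that on Ω: (E1) ∂_y Sˣ + ∂_x Sʸ = 4 q_x q_y; (E2) ∂_x Sˣ = 2 q_x²; (E3) ∂_y Sʸ = 2 q_y²; (E4) A''(x) − (Sˣ/q²) A'(x) = B''(y) − (Sʸ/q²) B'(y) (common value denoted w); (E5) −λ/q² = (1/2) w − (q_x A' + q_xx A + q_y B' + q_yy B)/q + (q_x² A + q_y² B)/q² + (Sˣ q_x A + Sʸ q_y B)/q³. Then a + b = 0. -/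

import Mathlib

open Real Set

/-- Partial derivative in the first variable. -/
noncomputable def px (f : ℝ × ℝ → ℝ) : ℝ × ℝ → ℝ :=
  fun p => deriv (fun t => f (t, p.2)) p.1

/-- Partial derivative in the second variable. -/
noncomputable def py (f : ℝ × ℝ → ℝ) : ℝ × ℝ → ℝ :=
  fun p => deriv (fun t => f (p.1, t)) p.2

namespace OppCurvAux

variable {Ω : Set (ℝ × ℝ)} {f : ℝ × ℝ → ℝ}

lemma one_le_inf : (1 : WithTop ℕ∞) ≤ ((⊤ : ℕ∞) : WithTop ℕ∞) := by
  exact_mod_cast (le_top : (1 : ℕ∞) ≤ ⊤)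

lemma diffAt (hΩ : IsOpen Ω) (hf : ContDiffOn ℝ (⊤ : ℕ∞) f Ω) {p : ℝ × ℝ} (hp : p ∈ Ω) :
    DifferentiableAt ℝ f p :=
  (hf.contDiffAt (hΩ.mem_nhds hp)).differentiableAt (by simp)

lemma curve_x (p : ℝ × ℝ) : HasDerivAt (fun t : ℝ => (t, p.2)) (((1 : ℝ), (0 : ℝ))) p.1 :=
  (hasDerivAt_id p.1).prodMk (hasDerivAt_const p.1 p.2)

lemma curve_y (p : ℝ × ℝ) : HasDerivAt (fun t : ℝ => (p.1, t)) (((0 : ℝ), (1 : ℝ))) p.2 :=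
  (hasDerivAt_const p.2 p.1).prodMk (hasDerivAt_id p.2)

lemma px_eq (hΩ : IsOpen Ω) (hf : ContDiffOn ℝ (⊤ : ℕ∞) f Ω) {p : ℝ × ℝ} (hp : p ∈ Ω) :
    px f p = fderiv ℝ f p (1, 0) :=
  ((diffAt hΩ hf hp).hasFDerivAt.comp_hasDerivAt p.1 (curve_x p)).deriv

lemma py_eq (hΩ : IsOpen Ω) (hf : ContDiffOn ℝ (⊤ : ℕ∞) f Ω) {p : ℝ × ℝ} (hp : p ∈ Ω) :
    py f p = fderiv ℝ f p (0, 1) :=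
  ((diffAt hΩ hf hp).hasFDerivAt.comp_hasDerivAt p.2 (curve_y p)).deriv

lemma hasDerivAt_px (hΩ : IsOpen Ω) (hf : ContDiffOn ℝ (⊤ : ℕ∞) f Ω) {p : ℝ × ℝ} (hp : p ∈ Ω) :
    HasDerivAt (fun t => f (t, p.2)) (px f p) p.1 := by
  rw [px_eq hΩ hf hp]
  exact (diffAt hΩ hf hp).hasFDerivAt.comp_hasDerivAt p.1 (curve_x p)

lemma hasDerivAt_py (hΩ : IsOpen Ω) (hf : ContDiffOn ℝ (⊤ : ℕ∞) f Ω) {p : ℝ × ℝ} (hp : p ∈ Ω) :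
    HasDerivAt (fun t => f (p.1, t)) (py f p) p.2 := by
  rw [py_eq hΩ hf hp]
  exact (diffAt hΩ hf hp).hasFDerivAt.comp_hasDerivAt p.2 (curve_y p)

lemma contDiffOn_px (hΩ : IsOpen Ω) (hf : ContDiffOn ℝ (⊤ : ℕ∞) f Ω) :
    ContDiffOn ℝ (⊤ : ℕ∞) (px f) Ω := by
  have h1 : ContDiffOn ℝ (⊤ : ℕ∞) (fderiv ℝ f) Ω :=
    ((contDiffOn_infty_iff_fderiv_of_isOpen hΩ).1 hf).2
  have h2 : ContDiffOn ℝ (⊤ : ℕ∞) (fun p : ℝ × ℝ => fderiv ℝ f p (1, 0)) Ω :=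
    h1.clm_apply contDiffOn_const
  exact h2.congr fun p hp => px_eq hΩ hf hp

lemma contDiffOn_py (hΩ : IsOpen Ω) (hf : ContDiffOn ℝ (⊤ : ℕ∞) f Ω) :
    ContDiffOn ℝ (⊤ : ℕ∞) (py f) Ω := by
  have h1 : ContDiffOn ℝ (⊤ : ℕ∞) (fderiv ℝ f) Ω :=
    ((contDiffOn_infty_iff_fderiv_of_isOpen hΩ).1 hf).2
  have h2 : ContDiffOn ℝ (⊤ : ℕ∞) (fun p : ℝ × ℝ => fderiv ℝ f p (0, 1)) Ω :=
    h1.clm_apply contDiffOn_const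
  exact h2.congr fun p hp => py_eq hΩ hf hp

lemma mem_nhds_x (hΩ : IsOpen Ω) {p : ℝ × ℝ} (hp : p ∈ Ω) :
    {t : ℝ | (t, p.2) ∈ Ω} ∈ nhds p.1 := by
  have hopen : IsOpen ((fun t : ℝ => (t, p.2)) ⁻¹' Ω) :=
    hΩ.preimage (continuous_id.prodMk continuous_const)
  exact hopen.mem_nhds (by exact hp)

lemma mem_nhds_y (hΩ : IsOpen Ω) {p : ℝ × ℝ} (hp : p ∈ Ω) :
    {t : ℝ | (p.1, t) ∈ Ω} ∈ nhds p.2 := by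
  have hopen : IsOpen ((fun t : ℝ => (p.1, t)) ⁻¹' Ω) :=
    hΩ.preimage (continuous_const.prodMk continuous_id)
  exact hopen.mem_nhds (by exact hp)

lemma px_congr (hΩ : IsOpen Ω) {u v : ℝ × ℝ → ℝ} (h : ∀ z ∈ Ω, u z = v z)
    {p : ℝ × ℝ} (hp : p ∈ Ω) : px u p = px v p := by
  have hev : (fun t => u (t, p.2)) =ᶠ[nhds p.1] (fun t => v (t, p.2)) :=
    Filter.eventuallyEq_of_mem (mem_nhds_x hΩ hp) fun t ht => h _ ht
  exact hev.deriv_eq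

lemma py_congr (hΩ : IsOpen Ω) {u v : ℝ × ℝ → ℝ} (h : ∀ z ∈ Ω, u z = v z)
    {p : ℝ × ℝ} (hp : p ∈ Ω) : py u p = py v p := by
  have hev : (fun t => u (p.1, t)) =ᶠ[nhds p.2] (fun t => v (p.1, t)) :=
    Filter.eventuallyEq_of_mem (mem_nhds_y hΩ hp) fun t ht => h _ ht
  exact hev.deriv_eq

/-- Clairaut: mixed partials agree for smooth functions on an open set. -/
lemma px_py_symm (hΩ : IsOpen Ω) (hf : ContDiffOn ℝ (⊤ : ℕ∞) f Ω) {p : ℝ × ℝ} (hp : p ∈ Ω) :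
    px (py f) p = py (px f) p := by
  have hf' : ContDiffOn ℝ (⊤ : ℕ∞) (fderiv ℝ f) Ω :=
    ((contDiffOn_infty_iff_fderiv_of_isOpen hΩ).1 hf).2
  have hev : ∀ᶠ z in nhds p, HasFDerivAt f (fderiv ℝ f z) z := by
    filter_upwards [hΩ.mem_nhds hp] with z hz
    exact (diffAt hΩ hf hz).hasFDerivAt
  have hdf' : DifferentiableAt ℝ (fderiv ℝ f) p :=
    (hf'.contDiffAt (hΩ.mem_nhds hp)).differentiableAt (by simp)
  have hsym := second_derivative_symmetric_of_eventually hev hdf'.hasFDerivAt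
      (((1 : ℝ), (0 : ℝ))) (((0 : ℝ), (1 : ℝ)))
  have h1 : px (py f) p = fderiv ℝ (fderiv ℝ f) p (1, 0) (0, 1) := by
    have hev2 : (fun t => py f (t, p.2)) =ᶠ[nhds p.1]
        (fun t => fderiv ℝ f (t, p.2) (0, 1)) :=
      Filter.eventuallyEq_of_mem (mem_nhds_x hΩ hp) fun t ht => py_eq hΩ hf ht
    have hc : HasDerivAt (fun t => fderiv ℝ f (t, p.2)) (fderiv ℝ (fderiv ℝ f) p (1, 0)) p.1 :=
      hdf'.hasFDerivAt.comp_hasDerivAt p.1 (curve_x p)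
    have hD : HasDerivAt (fun t => fderiv ℝ f (t, p.2) (0, 1))
        (fderiv ℝ (fderiv ℝ f) p (1, 0) (0, 1)) p.1 := by
      simpa using hc.clm_apply (hasDerivAt_const p.1 (((0 : ℝ), (1 : ℝ))))
    show deriv (fun t => py f (t, p.2)) p.1 = _
    rw [hev2.deriv_eq]
    exact hD.deriv
  have h2 : py (px f) p = fderiv ℝ (fderiv ℝ f) p (0, 1) (1, 0) := by
    have hev2 : (fun t => px f (p.1, t)) =ᶠ[nhds p.2]
        (fun t => fderiv ℝ f (p.1, t) (1, 0)) :=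
      Filter.eventuallyEq_of_mem (mem_nhds_y hΩ hp) fun t ht => px_eq hΩ hf ht
    have hc : HasDerivAt (fun t => fderiv ℝ f (p.1, t)) (fderiv ℝ (fderiv ℝ f) p (0, 1)) p.2 :=
      hdf'.hasFDerivAt.comp_hasDerivAt p.2 (curve_y p)
    have hD : HasDerivAt (fun t => fderiv ℝ f (p.1, t) (1, 0))
        (fderiv ℝ (fderiv ℝ f) p (0, 1) (1, 0)) p.2 := by
      simpa using hc.clm_apply (hasDerivAt_const p.2 (((1 : ℝ), (0 : ℝ))))
    show deriv (fun t => px f (p.1, t)) p.2 = _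
    rw [hev2.deriv_eq]
    exact hD.deriv
  rw [h1, h2, hsym]

end OppCurvAux

open OppCurvAux in
/-- if both surface factors have constant curvature
(`A = a x² + a₀`, `B = b y² + b₀`) and the full reduced soliton system holds with `q`
and all its first and second partials nowhere vanishing, then `a + b = 0`. -/
theorem opposite_curvatures
    (Ω : Set (ℝ × ℝ)) (hΩ : IsOpen Ω) (hconn : IsConnected Ω)
    (q Sx Sy : ℝ × ℝ → ℝ) (A B : ℝ → ℝ) (a a₀ b b₀ lam : ℝ)
    (hq : ContDiffOn ℝ (⊤ : ℕ∞) q Ω)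
    (hq0 : ∀ p ∈ Ω, q p ≠ 0)
    (hqx : ∀ p ∈ Ω, px q p ≠ 0)
    (hqy : ∀ p ∈ Ω, py q p ≠ 0)
    (hqxx : ∀ p ∈ Ω, px (px q) p ≠ 0)
    (hqyy : ∀ p ∈ Ω, py (py q) p ≠ 0)
    (hqxy : ∀ p ∈ Ω, py (px q) p ≠ 0)
    (hA : ∀ x : ℝ, A x = a * x ^ 2 + a₀)
    (hB : ∀ y : ℝ, B y = b * y ^ 2 + b₀)
    (hSx : ContDiffOn ℝ (⊤ : ℕ∞) Sx Ω)
    (hSy : ContDiffOn ℝ (⊤ : ℕ∞) Sy Ω)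
    (hE1 : ∀ p ∈ Ω, py Sx p + px Sy p = 4 * px q p * py q p)
    (hE2 : ∀ p ∈ Ω, px Sx p = 2 * (px q p) ^ 2)
    (hE3 : ∀ p ∈ Ω, py Sy p = 2 * (py q p) ^ 2)
    (hE4 : ∀ p ∈ Ω,
      deriv (deriv A) p.1 - Sx p / (q p) ^ 2 * deriv A p.1 =
        deriv (deriv B) p.2 - Sy p / (q p) ^ 2 * deriv B p.2)
    (hE5 : ∀ p ∈ Ω,
      -(lam / (q p) ^ 2) =
        (1 / 2) * (deriv (deriv A) p.1 - Sx p / (q p) ^ 2 * deriv A p.1)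
        - (px q p * deriv A p.1 + px (px q) p * A p.1
            + py q p * deriv B p.2 + py (py q) p * B p.2) / q p
        + ((px q p) ^ 2 * A p.1 + (py q p) ^ 2 * B p.2) / (q p) ^ 2
        + (Sx p * px q p * A p.1 + Sy p * py q p * B p.2) / (q p) ^ 3) :
    a + b = 0 := by
  -- smoothness of the various partial derivatives
  have hqxC : ContDiffOn ℝ (⊤ : ℕ∞) (px q) Ω := contDiffOn_px hΩ hq
  have hqyC : ContDiffOn ℝ (⊤ : ℕ∞) (py q) Ω := contDiffOn_py hΩ hq
  have hqxxC : ContDiffOn ℝ (⊤ : ℕ∞) (px (px q)) Ω := contDiffOn_px hΩ hqxC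
  have hqxyC : ContDiffOn ℝ (⊤ : ℕ∞) (py (px q)) Ω := contDiffOn_py hΩ hqxC
  have hRC : ContDiffOn ℝ (⊤ : ℕ∞) (px Sy) Ω := contDiffOn_px hΩ hSy
  -- reshaped basic identities
  have hE2' : ∀ z ∈ Ω, px Sx z = 2 * (px q z * px q z) := by
    intro z hz; have := hE2 z hz; linear_combination this
  have hE3' : ∀ z ∈ Ω, py Sy z = 2 * (py q z * py q z) := by
    intro z hz; have := hE3 z hz; linear_combination this
  have hE1' : ∀ z ∈ Ω, py Sx z = 4 * (px q z * py q z) - px Sy z := by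
    intro z hz; have := hE1 z hz; linear_combination this
  -- step 2 : px (px Sy) = 4 qxx qy
  have hpxR : ∀ p ∈ Ω, px (px Sy) p = 4 * (px (px q) p * py q p) := by
    intro p hp
    have hqx_x := hasDerivAt_px hΩ hqxC hp
    have hqy_x := hasDerivAt_px hΩ hqyC hp
    have hR_x := hasDerivAt_px hΩ hRC hp
    have hqx_y := hasDerivAt_py hΩ hqxC hp
    have e1 : px (py Sx) p
        = 4 * (px (px q) p * py q p + px q p * px (py q) p) - px (px Sy) p := by
      have hv : HasDerivAt
          (fun t => 4 * (px q (t, p.2) * py q (t, p.2)) - px Sy (t, p.2))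
          (4 * (px (px q) p * py q p + px q p * px (py q) p) - px (px Sy) p) p.1 :=
        ((hqx_x.mul hqy_x).const_mul 4).sub hR_x
      exact (px_congr hΩ hE1' hp).trans hv.deriv
    have e2 : py (px Sx) p = 2 * (py (px q) p * px q p + px q p * py (px q) p) := by
      have hv : HasDerivAt (fun t => 2 * (px q (p.1, t) * px q (p.1, t)))
          (2 * (py (px q) p * px q p + px q p * py (px q) p)) p.2 :=
        (hqx_y.mul hqx_y).const_mul 2
      exact (py_congr hΩ hE2' hp).trans hv.deriv
    have esym : px (py Sx) p = py (px Sx) p := px_py_symm hΩ hSx hp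
    have eq : px (py q) p = py (px q) p := px_py_symm hΩ hq hp
    rw [eq] at e1
    linear_combination e1 - e2 - esym
  -- step 3 : py (px Sy) = 4 qy qxy
  have hpyR : ∀ p ∈ Ω, py (px Sy) p = 4 * (py q p * py (px q) p) := by
    intro p hp
    have hqy_x := hasDerivAt_px hΩ hqyC hp
    have e4 : px (py Sy) p = 2 * (px (py q) p * py q p + py q p * px (py q) p) := by
      have hv : HasDerivAt (fun t => 2 * (py q (t, p.2) * py q (t, p.2)))
          (2 * (px (py q) p * py q p + py q p * px (py q) p)) p.1 :=
        (hqy_x.mul hqy_x).const_mul 2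
      exact (px_congr hΩ hE3' hp).trans hv.deriv
    have esym : px (py Sy) p = py (px Sy) p := px_py_symm hΩ hSy hp
    have eq : px (py q) p = py (px q) p := px_py_symm hΩ hq hp
    rw [eq] at e4
    linear_combination e4 - esym
  -- step 4 : qxx qyy = qxy²
  have hkey1 : ∀ p ∈ Ω,
      px (px q) p * py (py q) p = py (px q) p * py (px q) p := by
    intro p hp
    have hqxx_y := hasDerivAt_py hΩ hqxxC hp
    have hqy_y := hasDerivAt_py hΩ hqyC hp
    have hqy_x := hasDerivAt_px hΩ hqyC hp
    have hqxy_x := hasDerivAt_px hΩ hqxyC hp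
    have k1 : py (px (px Sy)) p
        = 4 * (py (px (px q)) p * py q p + px (px q) p * py (py q) p) := by
      have hv : HasDerivAt (fun t => 4 * (px (px q) (p.1, t) * py q (p.1, t)))
          (4 * (py (px (px q)) p * py q p + px (px q) p * py (py q) p)) p.2 :=
        (hqxx_y.mul hqy_y).const_mul 4
      exact (py_congr hΩ hpxR hp).trans hv.deriv
    have k2 : px (py (px Sy)) p
        = 4 * (px (py q) p * py (px q) p + py q p * px (py (px q)) p) := by
      have hv : HasDerivAt (fun t => 4 * (py q (t, p.2) * py (px q) (t, p.2)))
          (4 * (px (py q) p * py (px q) p + py q p * px (py (px q)) p)) p.1 :=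
        (hqy_x.mul hqxy_x).const_mul 4
      exact (px_congr hΩ hpyR hp).trans hv.deriv
    have ksym : px (py (px Sy)) p = py (px (px Sy)) p := px_py_symm hΩ hRC hp
    have ksym2 : px (py (px q)) p = py (px (px q)) p := px_py_symm hΩ hqxC hp
    have eq : px (py q) p = py (px q) p := px_py_symm hΩ hq hp
    rw [eq, ksym2] at k2
    linear_combination (k2 - k1 - ksym) / 4
  -- derivatives of A and B
  have hAfun : A = fun x => a * x ^ 2 + a₀ := funext hA
  have hBfun : B = fun y => b * y ^ 2 + b₀ := funext hB
  have hA1 : ∀ x : ℝ, HasDerivAt A (2 * a * x) x := by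
    intro x; rw [hAfun]
    have h := ((hasDerivAt_pow 2 x).const_mul a).add_const a₀
    refine h.congr_deriv ?_
    push_cast; ring
  have hB1 : ∀ y : ℝ, HasDerivAt B (2 * b * y) y := by
    intro y; rw [hBfun]
    have h := ((hasDerivAt_pow 2 y).const_mul b).add_const b₀
    refine h.congr_deriv ?_
    push_cast; ring
  have hA1' : deriv A = fun x => 2 * a * x := funext fun x => (hA1 x).deriv
  have hB1' : deriv B = fun y => 2 * b * y := funext fun y => (hB1 y).deriv
  have hA2 : ∀ x : ℝ, deriv (deriv A) x = 2 * a := by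
    intro x; rw [hA1']
    have h : HasDerivAt (fun x : ℝ => 2 * a * x) (2 * a) x := by
      simpa using (hasDerivAt_id x).const_mul (2 * a)
    exact h.deriv
  have hB2 : ∀ y : ℝ, deriv (deriv B) y = 2 * b := by
    intro y; rw [hB1']
    have h : HasDerivAt (fun y : ℝ => 2 * b * y) (2 * b) y := by
      simpa using (hasDerivAt_id y).const_mul (2 * b)
    exact h.deriv
  -- step 5 : the algebraic form of E4
  have hF : ∀ z ∈ Ω, (a - b) * (q z * q z) = a * (z.1 * Sx z) - b * (z.2 * Sy z) := by
    intro z hz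
    have h4 := hE4 z hz
    rw [hA2 z.1, hB2 z.2, hA1'] at h4
    rw [hB1'] at h4
    have hqz : q z ≠ 0 := hq0 z hz
    field_simp at h4
    linear_combination h4
  -- step 6 : x-derivative of hF
  have hD1 : ∀ z ∈ Ω, 2 * ((a - b) * (q z * px q z))
      = a * Sx z + 2 * (a * (z.1 * (px q z * px q z))) - b * (z.2 * px Sy z) := by
    intro p hp
    have hq_x := hasDerivAt_px hΩ hq hp
    have hSx_x := hasDerivAt_px hΩ hSx hp
    have hSy_x := hasDerivAt_px hΩ hSy hp
    have hu : HasDerivAt (fun t => (a - b) * (q (t, p.2) * q (t, p.2)))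
        ((a - b) * (px q p * q p + q p * px q p)) p.1 :=
      (hq_x.mul hq_x).const_mul (a - b)
    have hv : HasDerivAt (fun t => a * (t * Sx (t, p.2)) - b * (p.2 * Sy (t, p.2)))
        (a * (1 * Sx p + p.1 * px Sx p) - b * (p.2 * px Sy p)) p.1 :=
      (((hasDerivAt_id p.1).mul hSx_x).const_mul a).sub ((hSy_x.const_mul p.2).const_mul b)
    have raw : (a - b) * (px q p * q p + q p * px q p)
        = a * (1 * Sx p + p.1 * px Sx p) - b * (p.2 * px Sy p) :=
      (hu.deriv.symm.trans (px_congr hΩ hF hp)).trans hv.deriv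
    have he2 := hE2' p hp
    linear_combination raw + a * p.1 * he2
  -- step 7 : P1 : qxx * T = (a+b) qx²
  have hP1 : ∀ z ∈ Ω, px (px q) z *
      ((a - b) * q z - 2 * (a * (z.1 * px q z)) + 2 * (b * (z.2 * py q z)))
      = (a + b) * (px q z * px q z) := by
    intro p hp
    have hq_x := hasDerivAt_px hΩ hq hp
    have hqx_x := hasDerivAt_px hΩ hqxC hp
    have hSx_x := hasDerivAt_px hΩ hSx hp
    have hR_x := hasDerivAt_px hΩ hRC hp
    have hu : HasDerivAt (fun t => 2 * ((a - b) * (q (t, p.2) * px q (t, p.2))))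
        (2 * ((a - b) * (px q p * px q p + q p * px (px q) p))) p.1 :=
      ((hq_x.mul hqx_x).const_mul (a - b)).const_mul 2
    have hv : HasDerivAt
        (fun t => a * Sx (t, p.2) + 2 * (a * (t * (px q (t, p.2) * px q (t, p.2))))
          - b * (p.2 * px Sy (t, p.2)))
        (a * px Sx p
          + 2 * (a * (1 * (px q p * px q p)
              + p.1 * (px (px q) p * px q p + px q p * px (px q) p)))
          - b * (p.2 * px (px Sy) p)) p.1 :=
      ((hSx_x.const_mul a).add
        ((((hasDerivAt_id p.1).mul (hqx_x.mul hqx_x)).const_mul a).const_mul 2)).sub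
        ((hR_x.const_mul p.2).const_mul b)
    have raw : 2 * ((a - b) * (px q p * px q p + q p * px (px q) p))
        = a * px Sx p
          + 2 * (a * (1 * (px q p * px q p)
              + p.1 * (px (px q) p * px q p + px q p * px (px q) p)))
          - b * (p.2 * px (px Sy) p) :=
      (hu.deriv.symm.trans (px_congr hΩ hD1 hp)).trans hv.deriv
    have he2 := hE2' p hp
    have hr := hpxR p hp
    linear_combination raw / 2 + a / 2 * he2 - b / 2 * p.2 * hr
  -- step 8 : y-derivative of hF
  have hD1' : ∀ z ∈ Ω, 2 * ((a - b) * (q z * py q z))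
      = a * (z.1 * (4 * (px q z * py q z) - px Sy z)) - b * Sy z
        - 2 * (b * (z.2 * (py q z * py q z))) := by
    intro p hp
    have hq_y := hasDerivAt_py hΩ hq hp
    have hSx_y := hasDerivAt_py hΩ hSx hp
    have hSy_y := hasDerivAt_py hΩ hSy hp
    have hu : HasDerivAt (fun t => (a - b) * (q (p.1, t) * q (p.1, t)))
        ((a - b) * (py q p * q p + q p * py q p)) p.2 :=
      (hq_y.mul hq_y).const_mul (a - b)
    have hv : HasDerivAt (fun t => a * (p.1 * Sx (p.1, t)) - b * (t * Sy (p.1, t)))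
        (a * (p.1 * py Sx p) - b * (1 * Sy p + p.2 * py Sy p)) p.2 :=
      ((hSx_y.const_mul p.1).const_mul a).sub (((hasDerivAt_id p.2).mul hSy_y).const_mul b)
    have raw : (a - b) * (py q p * q p + q p * py q p)
        = a * (p.1 * py Sx p) - b * (1 * Sy p + p.2 * py Sy p) :=
      (hu.deriv.symm.trans (py_congr hΩ hF hp)).trans hv.deriv
    have he1 := hE1' p hp
    have he3 := hE3' p hp
    linear_combination raw + a * p.1 * he1 - b * p.2 * he3
  -- step 9 : P2 : qyy * T = -(a+b) qy²
  have hP2 : ∀ z ∈ Ω, py (py q) z *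
      ((a - b) * q z - 2 * (a * (z.1 * px q z)) + 2 * (b * (z.2 * py q z)))
      = -((a + b) * (py q z * py q z)) := by
    intro p hp
    have hq_y := hasDerivAt_py hΩ hq hp
    have hqx_y := hasDerivAt_py hΩ hqxC hp
    have hqy_y := hasDerivAt_py hΩ hqyC hp
    have hSy_y := hasDerivAt_py hΩ hSy hp
    have hR_y := hasDerivAt_py hΩ hRC hp
    have hu : HasDerivAt (fun t => 2 * ((a - b) * (q (p.1, t) * py q (p.1, t))))
        (2 * ((a - b) * (py q p * py q p + q p * py (py q) p))) p.2 :=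
      ((hq_y.mul hqy_y).const_mul (a - b)).const_mul 2
    have hv : HasDerivAt
        (fun t => a * (p.1 * (4 * (px q (p.1, t) * py q (p.1, t)) - px Sy (p.1, t)))
          - b * Sy (p.1, t) - 2 * (b * (t * (py q (p.1, t) * py q (p.1, t)))))
        (a * (p.1 * (4 * (py (px q) p * py q p + px q p * py (py q) p) - py (px Sy) p))
          - b * py Sy p
          - 2 * (b * (1 * (py q p * py q p)
              + p.2 * (py (py q) p * py q p + py q p * py (py q) p)))) p.2 :=
      by
        have t1 := ((((hqx_y.mul hqy_y).const_mul 4).sub hR_y).const_mul p.1).const_mul a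
        have t3 := hSy_y.const_mul b
        have t4 := (((hasDerivAt_id p.2).mul (hqy_y.mul hqy_y)).const_mul b).const_mul 2
        exact (t1.sub t3).sub t4
    have raw : 2 * ((a - b) * (py q p * py q p + q p * py (py q) p))
        = a * (p.1 * (4 * (py (px q) p * py q p + px q p * py (py q) p) - py (px Sy) p))
          - b * py Sy p
          - 2 * (b * (1 * (py q p * py q p)
              + p.2 * (py (py q) p * py q p + py q p * py (py q) p))) :=
      (hu.deriv.symm.trans (py_congr hΩ hD1' hp)).trans hv.deriv
    have he3 := hE3' p hp
    have hr := hpyR p hp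
    linear_combination raw / 2 - a / 2 * p.1 * hr - b / 2 * he3
  -- final algebra at a point of Ω
  obtain ⟨p, hp⟩ := hconn.nonempty
  set X := px q p with hX
  set Y := py q p with hY
  set Z := px (px q) p with hZ
  set W := py (py q) p with hW
  set M := py (px q) p with hM
  set T := (a - b) * q p - 2 * (a * (p.1 * px q p)) + 2 * (b * (p.2 * py q p)) with hT
  have h1 : Z * T = (a + b) * (X * X) := hP1 p hp
  have h2 : W * T = -((a + b) * (Y * Y)) := hP2 p hp
  have h3 : Z * W = M * M := hkey1 p hp
  have hsum : ((a + b) * (X * Y)) ^ 2 + (M * T) ^ 2 = 0 := by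
    linear_combination (W * T) * h1 + ((a + b) * (X * X)) * h2 - T ^ 2 * h3
  have hzero : (a + b) * (X * Y) = 0 := by
    have hs1 : ((a + b) * (X * Y)) ^ 2 = 0 := by
      nlinarith [sq_nonneg ((a + b) * (X * Y)), sq_nonneg (M * T)]
    exact pow_eq_zero_iff (by norm_num : (2:ℕ) ≠ 0) |>.mp hs1
  have hXY : X * Y ≠ 0 := mul_ne_zero (hqx p hp) (hqy p hp)
  rcases mul_eq_zero.mp hzero with h | h
  · exact h
  · exact absurd h hXY
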